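/- Under assumptions (f1)–(f5) on f (C² on [0,1), vanishing only at 0, lim_{s→1⁻}(1-s)f(s) = σ_c > 0, (1-s)f(s) strictly increasing, (1-s)f'(s)/f(s) strictly decreasing, and lim_{s→1⁻}(1-s)⁻³ (d/ds)[(1-s)f(s)] = +∞), the function f̄(s) = f'(s)/((1-s)f(s)³) satisfies lim_{s→0⁺} f̄(s) = +∞ and lim_{s→1⁻} f̄(s) = 1/σ_c². -/

import Mathlib

open Set Filter Topology

/-- Under assumptions (f1)-(f5), `f̄(s) = f'(s)/((1-s)f(s)³)` satisfies
`f̄(s) → +∞` as `s → 0⁺` and `f̄(s) → 1/σ_c²` as `s → 1⁻`. -/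
theorem stmt3 (f f' f'' : ℝ → ℝ) (σc : ℝ) (hσ : 0 < σc)
    (hf_nonneg : ∀ s ∈ Ico (0:ℝ) 1, 0 ≤ f s)
    (hf_zero : ∀ s ∈ Ico (0:ℝ) 1, (f s = 0 ↔ s = 0))
    (hc0 : ContinuousOn f (Ico 0 1))
    (hd1 : ∀ s ∈ Ioo (0:ℝ) 1, HasDerivAt f (f' s) s)
    (hd2 : ∀ s ∈ Ioo (0:ℝ) 1, HasDerivAt f' (f'' s) s)
    (hc2 : ContinuousOn f'' (Ioo 0 1))
    (hf3 : ∀ s ∈ Ioo (0:ℝ) 1, 0 < (1 - s) * f' s - f s)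
    (hf2 : Tendsto (fun s => (1 - s) * f s) (nhdsWithin 1 (Iio 1)) (nhds σc))
    (hf4 : ∀ s ∈ Ioo (0:ℝ) 1, deriv (fun t => (1 - t) * f' t / f t) s < 0)
    (hf5 : Tendsto (fun s => ((1 - s) * f' s - f s) / (1 - s) ^ 3)
      (nhdsWithin 1 (Iio 1)) atTop) :
    Tendsto (fun s => f' s / ((1 - s) * (f s) ^ 3)) (nhdsWithin 0 (Ioi 0)) atTop ∧
      Tendsto (fun s => f' s / ((1 - s) * (f s) ^ 3)) (nhdsWithin 1 (Iio 1))
        (nhds (1 / σc ^ 2)) := by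
  have hfpos : ∀ s ∈ Ioo (0:ℝ) 1, 0 < f s := by
    intro s hs
    rcases (hf_nonneg s ⟨hs.1.le, hs.2⟩).lt_or_eq with h | h
    · exact h
    · exact absurd ((hf_zero s ⟨hs.1.le, hs.2⟩).mp h.symm) (ne_of_gt hs.1)
  set g : ℝ → ℝ := fun t => (1 - t) * f t with hg_def
  set h : ℝ → ℝ := fun t => (1 - t) * f' t / f t with hh_def
  have hgd : ∀ s ∈ Ioo (0:ℝ) 1, HasDerivAt g ((1 - s) * f' s - f s) s := by
    intro s hs
    have := ((hasDerivAt_id s).const_sub 1).mul (hd1 s hs)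
    refine this.congr_deriv ?_
    simp only [id_eq]
    ring
  have hnd : ∀ s ∈ Ioo (0:ℝ) 1,
      HasDerivAt (fun t => (1 - t) * f' t) (-1 * f' s + (1 - s) * f'' s) s := by
    intro s hs
    have h1 := ((hasDerivAt_id s).const_sub 1).mul (hd2 s hs)
    refine h1.congr_deriv ?_
    rfl
  have hhd : ∀ s ∈ Ioo (0:ℝ) 1, DifferentiableAt ℝ h s := by
    intro s hs
    exact ((hnd s hs).differentiableAt.div (hd1 s hs).differentiableAt
      (ne_of_gt (hfpos s hs)))
  have hanti : StrictAntiOn h (Ioo 0 1) := by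
    apply strictAntiOn_of_deriv_neg (convex_Ioo 0 1)
    · exact fun s hs => (hhd s hs).continuousAt.continuousWithinAt
    · intro s hs
      rw [interior_Ioo] at hs
      exact hf4 s hs
  have hgt1 : ∀ s ∈ Ioo (0:ℝ) 1, 1 < h s := by
    intro s hs
    rw [hh_def]
    rw [lt_div_iff₀ (hfpos s hs)]
    have := hf3 s hs
    linarith
  have hEq : ∀ s ∈ Ioo (0:ℝ) 1, f' s / ((1 - s) * (f s) ^ 3) = h s / (g s) ^ 2 := by
    intro s hs
    have h1 : f s ≠ 0 := ne_of_gt (hfpos s hs)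
    have h2 : (1 : ℝ) - s ≠ 0 := by have := hs.2; intro hc; linarith [sub_eq_zero.mp hc]
    rw [hh_def, hg_def]
    field_simp
  have hmono : StrictMonoOn g (Ioo 0 1) := by
    apply strictMonoOn_of_deriv_pos (convex_Ioo 0 1)
    · exact fun s hs => (hgd s hs).differentiableAt.continuousAt.continuousWithinAt
    · intro s hs
      rw [interior_Ioo] at hs
      rw [(hgd s hs).deriv]
      exact hf3 s hs
  have hhalf : (1/2 : ℝ) ∈ Ioo (0:ℝ) 1 := by norm_num
  have hghalf : 0 < g (1/2) := by
    rw [hg_def]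
    have := hfpos _ hhalf
    norm_num
    linarith
  -- Part 1
  have part1 : Tendsto (fun s => f' s / ((1 - s) * (f s) ^ 3)) (𝓝[>] (0:ℝ)) atTop := by
    have h0 : f 0 = 0 := (hf_zero 0 ⟨le_refl 0, one_pos⟩).mpr rfl
    have hg0 : Tendsto g (𝓝[>] (0:ℝ)) (𝓝 0) := by
      have hc : ContinuousWithinAt g (Ico 0 1) 0 :=
        (continuous_const.sub continuous_id).continuousWithinAt.mul
          (hc0 0 ⟨le_refl 0, one_pos⟩)
      have h1 : Tendsto g (𝓝[Ico 0 1] 0) (𝓝 0) := by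
        have : g 0 = 0 := by rw [hg_def]; simp [h0]
        simpa [this] using hc.tendsto
      rw [← nhdsWithin_Ioo_eq_nhdsGT (one_pos : (0:ℝ) < 1)]
      exact h1.mono_left (nhdsWithin_mono _ Ioo_subset_Ico_self)
    have hmem : Ioo (0:ℝ) (1/2) ∈ 𝓝[>] (0:ℝ) := Ioo_mem_nhdsGT_of_mem (by norm_num)
    have hinv : Tendsto (fun s => ((g s) ^ 2)⁻¹) (𝓝[>] (0:ℝ)) atTop := by
      apply tendsto_inv_nhdsGT_zero.comp
      rw [tendsto_nhdsWithin_iff]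
      constructor
      · simpa using hg0.pow 2
      · filter_upwards [hmem] with s hs
        have hs' : s ∈ Ioo (0:ℝ) 1 := ⟨hs.1, by linarith [hs.2]⟩
        have hgs : g s = (1 - s) * f s := rfl
        have hpos : 0 < g s := by rw [hgs]; have := hfpos s hs'; nlinarith [hs'.2]
        show g s ^ 2 ∈ Ioi 0
        exact mem_Ioi.mpr (by positivity)
    have hc1 : (1:ℝ) < h (1/2) := hgt1 _ hhalf
    have hmul : Tendsto (fun s => h (1/2) * ((g s) ^ 2)⁻¹) (𝓝[>] (0:ℝ)) atTop :=
      hinv.const_mul_atTop (by linarith)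
    apply tendsto_atTop_mono' _ _ hmul
    filter_upwards [hmem] with s hs
    have hs' : s ∈ Ioo (0:ℝ) 1 := ⟨hs.1, by linarith [hs.2]⟩
    rw [hEq s hs']
    have hgs : g s = (1 - s) * f s := rfl
    have hgpos : 0 < g s := by rw [hgs]; have := hfpos s hs'; nlinarith [hs'.2]
    rw [div_eq_mul_inv]
    have hc2' : (0:ℝ) ≤ ((g s) ^ 2)⁻¹ := by positivity
    exact mul_le_mul_of_nonneg_right (hanti hs' hhalf (by linarith [hs.2])).le hc2'
  -- Part 2
  have hne : (h '' Ioo (0:ℝ) 1).Nonempty := ⟨h (1/2), mem_image_of_mem _ hhalf⟩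
  have hbdd : BddBelow (h '' Ioo (0:ℝ) 1) := by
    refine ⟨1, ?_⟩
    rintro y ⟨s, hs, rfl⟩
    exact (hgt1 s hs).le
  set L := sInf (h '' Ioo (0:ℝ) 1) with hL_def
  have hLtend : Tendsto h (𝓝[<] (1:ℝ)) (𝓝 L) :=
    hanti.antitoneOn.tendsto_nhdsWithin_Ioo_left ⟨1/2, hhalf⟩ hbdd
  have hL1 : 1 ≤ L := le_csInf hne (by rintro y ⟨s, hs, rfl⟩; exact (hgt1 s hs).le)
  have hLge : ∀ s ∈ Ioo (0:ℝ) 1, L ≤ h s := by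
    intro s hs
    exact csInf_le hbdd (mem_image_of_mem _ hs)
  have hgle : ∀ t ∈ Ioo (0:ℝ) 1, g t ≤ σc := by
    intro t ht
    refine ge_of_tendsto hf2 ?_
    filter_upwards [Ioo_mem_nhdsLT_of_mem (⟨ht.2, le_refl 1⟩ : (1:ℝ) ∈ Ioc t 1)] with s hs
    exact (hmono ht ⟨ht.1.trans hs.1, hs.2⟩ hs.1).le
  have hLeq : L = 1 := by
    by_contra hne1
    have hLgt : 1 < L := lt_of_le_of_ne hL1 (Ne.symm hne1)
    set c := (L - 1) * g (1/2) with hc_def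
    have hcpos : 0 < c := mul_pos (by linarith) hghalf
    -- comparison function ψ s = g s + c * log (1 - s) is monotone on [1/2, t] for t < 1
    have key : ∀ t ∈ Ioo (1/2 : ℝ) 1, g (1/2) + c * Real.log (1 - 1/2) ≤
        g t + c * Real.log (1 - t) := by
      intro t ht
      set ψ : ℝ → ℝ := fun s => g s + c * Real.log (1 - s) with hψ_def
      have hψd : ∀ s ∈ Ioo (0:ℝ) 1,
          HasDerivAt ψ (((1 - s) * f' s - f s) - c / (1 - s)) s := by
        intro s hs
        have h2 : (1 : ℝ) - s ≠ 0 := by have := hs.2; intro hc'; linarith [sub_eq_zero.mp hc']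
        have hlog : HasDerivAt (fun u => Real.log (1 - u)) (-(1 - s)⁻¹) s := by
          have := (Real.hasDerivAt_log h2).comp s ((hasDerivAt_id s).const_sub 1)
          refine this.congr_deriv ?_
          simp
        have := (hgd s hs).add ((hlog.const_mul c))
        refine this.congr_deriv ?_
        rw [div_eq_mul_inv]
        ring
      have hmonoψ : MonotoneOn ψ (Icc (1/2 : ℝ) t) := by
        have hsub : Icc (1/2 : ℝ) t ⊆ Ioo (0:ℝ) 1 := by
          intro x hx
          exact ⟨by linarith [hx.1], by linarith [hx.2, ht.2]⟩
        apply monotoneOn_of_deriv_nonneg (convex_Icc _ _)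
        · exact fun s hs => (hψd s (hsub hs)).differentiableAt.continuousAt.continuousWithinAt
        · intro s hs
          rw [interior_Icc] at hs
          exact (hψd s (hsub ⟨hs.1.le, hs.2.le⟩)).differentiableAt.differentiableWithinAt
        · intro s hs
          rw [interior_Icc] at hs
          have hs' : s ∈ Ioo (0:ℝ) 1 := hsub ⟨hs.1.le, hs.2.le⟩
          rw [(hψd s hs').deriv]
          have h1s : 0 < 1 - s := by linarith [hs'.2]
          have hfs : 0 < f s := hfpos s hs'
          have hhs : L ≤ h s := hLge s hs'
          have h5 : L * f s ≤ (1 - s) * f' s := by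
            rw [hh_def] at hhs
            rw [le_div_iff₀ hfs] at hhs
            linarith
          have h6 : g (1/2) ≤ g s := by
            rcases eq_or_lt_of_le hs.1.le with h | h
            · rw [← h]
            · exact (hmono hhalf hs' h).le
          have h7 : g s = (1 - s) * f s := rfl
          have h8 : c / (1 - s) ≤ (L - 1) * f s := by
            rw [div_le_iff₀ h1s, hc_def]
            have : g (1/2) ≤ (1 - s) * f s := by rw [← h7]; exact h6
            nlinarith
          linarith
      have := hmonoψ (left_mem_Icc.mpr ht.1.le) (right_mem_Icc.mpr ht.1.le) ht.1.le
      simpa [hψ_def] using this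
    -- choose t close to 1 to get contradiction
    set B := max ((σc - g (1/2) - c * Real.log (1/2)) / c + 1) 1 with hB_def
    have hB1 : (1:ℝ) ≤ B := le_max_right _ _
    set t := 1 - Real.exp (-B) with ht_def
    have hexp_pos : 0 < Real.exp (-B) := Real.exp_pos _
    have hexp_lt : Real.exp (-B) < 1/2 := by
      have h1 : Real.exp (-B) ≤ Real.exp (-1) := Real.exp_le_exp.mpr (by linarith)
      have h2 : Real.exp (-1) < 1/2 := by
        rw [Real.exp_neg, inv_eq_one_div]
        rw [div_lt_div_iff₀ (Real.exp_pos 1) (by norm_num : (0:ℝ) < 2)]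
        linarith [Real.exp_one_gt_d9]
      linarith
    have htmem : t ∈ Ioo (1/2 : ℝ) 1 := ⟨by rw [ht_def]; linarith, by rw [ht_def]; linarith⟩
    have hkey := key t htmem
    have hlog_t : Real.log (1 - t) = -B := by
      rw [ht_def]
      simp [Real.log_exp]
    have hBge : (σc - g (1/2) - c * Real.log (1/2)) / c + 1 ≤ B := le_max_left _ _
    have hcB : σc - g (1/2) - c * Real.log (1/2) + c ≤ c * B := by
      rw [div_add' _ _ _ (ne_of_gt hcpos)] at hBge
      rw [div_le_iff₀ hcpos] at hBge
      linarith [hBge]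
    have hgt : g t ≤ σc := hgle t ⟨by linarith [htmem.1], htmem.2⟩
    rw [hlog_t] at hkey
    have : (1:ℝ) - 1/2 = 1/2 := by norm_num
    rw [this] at hkey
    nlinarith
  -- conclude part 2
  have hht : Tendsto h (𝓝[<] (1:ℝ)) (𝓝 1) := hLeq ▸ hLtend
  have hg2 : Tendsto (fun s => (g s) ^ 2) (𝓝[<] (1:ℝ)) (𝓝 (σc ^ 2)) := hf2.pow 2
  have hdiv : Tendsto (fun s => h s / (g s) ^ 2) (𝓝[<] (1:ℝ)) (𝓝 (1 / σc ^ 2)) :=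
    hht.div hg2 (by positivity)
  refine ⟨part1, ?_⟩
  apply hdiv.congr'
  filter_upwards [Ioo_mem_nhdsLT_of_mem (⟨one_pos, le_refl 1⟩ : (1:ℝ) ∈ Ioc 0 1)] with s hs
  exact (hEq s hs).symm
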